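/- Let q = 2^n and L ∈ F_{q²} \ F_q with L^{q+1} ≠ 1. Then Tr_{F_q/F_2}( (L+1)^{q+1}(L+L^q) / (L^{q+1}+1)² ) = 0. -/

import Mathlib

/-- Any Frobenius-fixed element of `M` lies in the image of `K`. -/
lemma mem_range_of_pow_card (K M : Type*) [Field K] [Fintype K] [Field M] [Fintype M]
    [Algebra K M] {x : M} (hx : x ^ Fintype.card K = x) :
    x ∈ Set.range (algebraMap K M) := by
  classical
  set q := Fintype.card K with hq
  have hq1 : 1 < q := Fintype.one_lt_card
  set p : Polynomial M := Polynomial.X ^ q - Polynomial.X with hp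
  have hpne : p ≠ 0 := FiniteField.X_pow_card_sub_X_ne_zero M hq1
  have hdeg : p.natDegree = q := FiniteField.X_pow_card_sub_X_natDegree_eq M hq1
  set S : Finset M := Finset.univ.image (algebraMap K M) with hS
  have hScard : S.card = q := by
    rw [hS, Finset.card_image_of_injective _ (algebraMap K M).injective, Finset.card_univ]
  have hSsub : S ⊆ p.roots.toFinset := by
    intro y hy
    simp only [hS, Finset.mem_image] at hy
    obtain ⟨a, -, rfl⟩ := hy
    rw [Multiset.mem_toFinset, Polynomial.mem_roots hpne]
    simp only [hp, Polynomial.IsRoot.def, Polynomial.eval_sub, Polynomial.eval_pow,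
      Polynomial.eval_X, sub_eq_zero]
    rw [← map_pow, FiniteField.pow_card]
  have hx' : x ∈ p.roots.toFinset := by
    rw [Multiset.mem_toFinset, Polynomial.mem_roots hpne]
    simp only [hp, Polynomial.IsRoot.def, Polynomial.eval_sub, Polynomial.eval_pow,
      Polynomial.eval_X, sub_eq_zero]
    exact hx
  have hcard : p.roots.toFinset.card ≤ q := by
    calc p.roots.toFinset.card ≤ Multiset.card p.roots := p.roots.toFinset_card_le
      _ ≤ p.natDegree := p.card_roots' 
      _ = q := hdeg
  have : S = p.roots.toFinset := Finset.eq_of_subset_of_card_le hSsub (hcard.trans_eq hScard.symm)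
  rw [← this] at hx'
  simp only [hS, Finset.mem_image] at hx'
  obtain ⟨a, -, rfl⟩ := hx'
  exact ⟨a, rfl⟩

/-- Trace to `ZMod 2` is invariant under squaring. -/
lemma trace_sq (K : Type*) [Field K] [Fintype K] [Algebra (ZMod 2) K] (x : K) :
    Algebra.trace (ZMod 2) K (x ^ 2) = Algebra.trace (ZMod 2) K x := by
  haveI : CharP K 2 := charP_of_injective_algebraMap (algebraMap (ZMod 2) K).injective 2
  haveI : Fact (Nat.Prime 2) := ⟨Nat.prime_two⟩
  let e : K ≃ₐ[ZMod 2] K :=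
    { frobeniusEquiv K 2 with
      commutes' := fun c => by
        show frobenius K 2 (algebraMap (ZMod 2) K c) = algebraMap (ZMod 2) K c
        rw [frobenius_def, ← map_pow, ZMod.pow_card] }
  have := Algebra.trace_eq_of_algEquiv e x
  rw [show e x = x ^ 2 from rfl] at this
  exact this

/-- For `q = 2^n` and `L ∈ F_{q²} \ F_q` with `L^{q+1} ≠ 1`, the element
`(L+1)^{q+1}(L+L^q)/(L^{q+1}+1)²` lies in `F_q` and has absolute trace `0`. -/
theorem stmt12 (n q : ℕ) (hn : 0 < n) (hq : q = 2 ^ n)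
    (K M : Type*) [Field K] [Fintype K] [Field M] [Fintype M] [Algebra K M]
    [Algebra (ZMod 2) K] (hK : Fintype.card K = q) (hM : Fintype.card M = q ^ 2)
    (l : M) (hl : l ∉ Set.range (algebraMap K M)) (h1 : l ^ (q + 1) ≠ 1) :
    ∃ a : K, algebraMap K M a =
        (l + 1) ^ (q + 1) * (l + l ^ q) / (l ^ (q + 1) + 1) ^ 2 ∧
      Algebra.trace (ZMod 2) K a = 0 := by
  haveI : CharP K 2 := charP_of_injective_algebraMap (algebraMap (ZMod 2) K).injective 2
  haveI : CharP M 2 := charP_of_injective_algebraMap (algebraMap K M).injective 2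
  -- Frobenius additivity in M
  have hfrob : ∀ x y : M, (x + y) ^ q = x ^ q + y ^ q := by
    intro x y; rw [hq]; exact add_pow_char_pow x y 2 n
  -- l ^ (q*q) = l
  have hll : l ^ (q * q) = l := by
    have := FiniteField.pow_card l (K := M)
    rwa [hM, sq] at this
  -- the denominator is nonzero
  have hden : l ^ (q + 1) + 1 ≠ 0 := by
    intro h
    have h' : l ^ (q + 1) = -1 := eq_neg_of_add_eq_zero_left h
    rw [CharTwo.neg_eq] at h'
    exact h1 h'
  -- key quantities
  set t : M := l + l ^ q with ht
  set N : M := l ^ (q + 1) with hN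
  have htq : t ^ q = t := by
    rw [ht, hfrob, ← pow_mul, hll, add_comm]
  have hNq : N ^ q = N := by
    rw [hN, ← pow_mul, add_mul, one_mul, pow_add, hll, pow_succ, mul_comm]
  -- b := t / (N+1) is Frobenius-fixed, hence lies in K
  have hbq : (t / (N + 1)) ^ q = t / (N + 1) := by
    rw [div_pow, htq, hfrob, one_pow, hNq]
  obtain ⟨β, hβ⟩ := mem_range_of_pow_card K M (x := t / (N + 1)) (by rwa [hK])
  refine ⟨β ^ 2 + β, ?_, ?_⟩
  · -- the field identity
    rw [map_add, map_pow, hβ]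
    have hexp : (l + 1) ^ (q + 1) = N + t + 1 := by
      rw [pow_succ, hfrob, one_pow, hN, pow_succ, ht]
      ring
    rw [hexp]
    field_simp
    ring
  · rw [map_add, trace_sq]
    exact CharTwo.add_self_eq_zero _
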